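/- arXiv:1206.5123 — 5 statements merged into one kernel-verified Lean document; each statement's English description precedes it below -/
import Mathlib

section
/- Let a_1 < b_1 < a_2 < b_2 < ... < a_k < b_k be real numbers. Then for every complex number z with strictly positive imaginary part, the imaginary part of the product ∏_{i=1}^k (z - b_i)/(z - a_i) is nonzero. -/
open Complex Real

private lemma ratio_lt (m s t : ℝ) (hm : 0 < m) (h : s < t) :
    s / Real.sqrt (s ^ 2 + m ^ 2) < t / Real.sqrt (t ^ 2 + m ^ 2) := by
  have hA : 0 < Real.sqrt (s ^ 2 + m ^ 2) := Real.sqrt_pos.2 (by positivity)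
  have hB : 0 < Real.sqrt (t ^ 2 + m ^ 2) := Real.sqrt_pos.2 (by positivity)
  have hA2 : Real.sqrt (s ^ 2 + m ^ 2) ^ 2 = s ^ 2 + m ^ 2 := Real.sq_sqrt (by positivity)
  have hB2 : Real.sqrt (t ^ 2 + m ^ 2) ^ 2 = t ^ 2 + m ^ 2 := Real.sq_sqrt (by positivity)
  rw [div_lt_div_iff₀ hA hB]
  set A := Real.sqrt (s ^ 2 + m ^ 2)
  set B := Real.sqrt (t ^ 2 + m ^ 2)
  rcases le_or_gt 0 s with hs | hs
  · have ht : 0 < t := lt_of_le_of_lt hs h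
    nlinarith [hA2, hB2, mul_nonneg hs hB.le, mul_pos ht hA, mul_pos hm hm,
      mul_pos (sub_pos.2 h) (show (0:ℝ) < t + s from by linarith)]
  · rcases lt_or_ge 0 t with ht | ht
    · have h1 : s * B < 0 := mul_neg_of_neg_of_pos hs hB
      have h2 : 0 < t * A := mul_pos ht hA
      linarith
    · nlinarith [hA2, hB2, mul_pos (neg_pos.2 hs) hB, mul_nonneg (neg_nonneg.2 ht) hA.le,
        mul_pos hm hm, mul_pos (sub_pos.2 h) (show (0:ℝ) < -t + -s from by linarith)]

/-- For interlacing reals `a 0 < b 0 < a 1 < b 1 < … < a (k-1) < b (k-1)` and `z` in the open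
upper half plane, the imaginary part of `∏ i, (z - b i)/(z - a i)` is nonzero. -/
theorem stmt0 (k : ℕ) (hk : 0 < k) (a b : Fin k → ℝ)
    (hab : ∀ i, a i < b i) (hba : ∀ i j : Fin k, i < j → b i < a j)
    (z : ℂ) (hz : 0 < z.im) :
    (∏ i, (z - (b i : ℂ)) / (z - (a i : ℂ))).im ≠ 0 := by
  have pi_pos := Real.pi_pos
  -- basic nonvanishing
  have him : ∀ x : ℝ, (z - (x : ℂ)).im = z.im := by intro x; simp
  have hne : ∀ x : ℝ, z - (x : ℂ) ≠ 0 := by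
    intro x h
    have := congrArg Complex.im h
    rw [him x] at this
    simp at this; linarith
  set φ : ℝ → ℝ := fun x => (z - (x : ℂ)).arg with hφ
  have hφpos : ∀ x : ℝ, 0 < φ x := by
    intro x
    rcases lt_or_eq_of_le (Complex.arg_nonneg_iff.2 (by rw [him x]; exact hz.le)) with h | h
    · exact h
    · exfalso
      have := Complex.arg_eq_zero_iff.1 h.symm
      rw [him x] at this
      linarith [this.2]
  have hφlt : ∀ x : ℝ, φ x < π := by
    intro x
    exact Complex.arg_lt_pi_iff.2 (Or.inr (by rw [him x]; linarith))
  have habs : ∀ x : ℝ, ‖z - (x : ℂ)‖ = Real.sqrt ((z.re - x) ^ 2 + z.im ^ 2) := by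
    intro x
    rw [Complex.norm_def, Complex.normSq_apply]
    simp [him x]
    ring_nf
  have hre : ∀ x : ℝ, (z - (x : ℂ)).re = z.re - x := by intro x; simp
  -- monotonicity of φ
  have hmono : ∀ x y : ℝ, x < y → φ x < φ y := by
    intro x y hxy
    have hcx : Real.cos (φ x) = (z.re - x) / Real.sqrt ((z.re - x) ^ 2 + z.im ^ 2) := by
      rw [hφ]; rw [Complex.cos_arg (hne x), hre x, habs x]
    have hcy : Real.cos (φ y) = (z.re - y) / Real.sqrt ((z.re - y) ^ 2 + z.im ^ 2) := by
      rw [hφ]; rw [Complex.cos_arg (hne y), hre y, habs y]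
    have hlt : Real.cos (φ y) < Real.cos (φ x) := by
      rw [hcx, hcy]
      exact ratio_lt z.im _ _ hz (by linarith)
    exact (Real.strictAntiOn_cos.lt_iff_gt
      ⟨(hφpos y).le, (hφlt y).le⟩ ⟨(hφpos x).le, (hφlt x).le⟩).1 hlt
  -- the factors
  set f : Fin k → ℂ := fun i => (z - (b i : ℂ)) / (z - (a i : ℂ)) with hf
  have hfne : ∀ i, f i ≠ 0 := fun i => div_ne_zero (hne (b i)) (hne (a i))
  set θ : Fin k → ℝ := fun i => φ (b i) - φ (a i) with hθ
  have hθpos : ∀ i, 0 < θ i := fun i => sub_pos.2 (hmono _ _ (hab i))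
  -- sum of angles
  set S : ℝ := ∑ i, θ i with hS
  have hSpos : 0 < S := by
    have : Nonempty (Fin k) := ⟨⟨0, hk⟩⟩
    exact Finset.sum_pos (fun i _ => hθpos i) Finset.univ_nonempty
  -- telescoping bound : S < π
  have key : ∀ n : ℕ, 0 < n → ∀ F G : ℕ → ℝ,
      (∀ i, i + 1 < n → G i ≤ F (i + 1)) →
      ∑ i ∈ Finset.range n, (G i - F i) ≤ G (n - 1) - F 0 := by
    intro n hn
    induction n with
    | zero => omega
    | succ m ih =>
      intro F G hGF
      rcases Nat.eq_zero_or_pos m with hm | hm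
      · subst hm; simp
      · rw [Finset.sum_range_succ]
        have h1 := ih hm F G (fun i hi => hGF i (by omega))
        have h2 : G (m - 1) ≤ F m := by
          have := hGF (m - 1) (by omega)
          rwa [Nat.sub_add_cancel hm] at this
        simp only [Nat.succ_sub_one]
        linarith
  have hSlt : S < π := by
    set A : ℕ → ℝ := fun i => a ⟨min i (k - 1), by omega⟩ with hA
    set B : ℕ → ℝ := fun i => b ⟨min i (k - 1), by omega⟩ with hB
    have hfin : ∀ i : Fin k, (⟨min (i : ℕ) (k - 1), by omega⟩ : Fin k) = i :=
      fun i => Fin.ext (show min (i : ℕ) (k - 1) = (i : ℕ) by omega)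
    have hcast : ∀ i : Fin k, A (i : ℕ) = a i ∧ B (i : ℕ) = b i := by
      intro i
      exact ⟨congrArg a (hfin i), congrArg b (hfin i)⟩
    have hrange : S = ∑ i ∈ Finset.range k, (φ (B i) - φ (A i)) := by
      rw [hS, ← Fin.sum_univ_eq_sum_range (fun i => φ (B i) - φ (A i)) k]
      refine Finset.sum_congr rfl fun i _ => ?_
      rw [hθ, (hcast i).1, (hcast i).2]
    have hbd := key k hk (fun i => φ (A i)) (fun i => φ (B i)) (by
      intro i hi
      refine (hmono _ _ ?_).le
      rw [hA, hB]
      refine hba _ _ ?_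
      simp only [Fin.mk_lt_mk]
      omega)
    rw [hrange]
    calc ∑ i ∈ Finset.range k, (φ (B i) - φ (A i)) ≤ φ (B (k - 1)) - φ (A 0) := hbd
      _ < π - 0 := by
          have := hφlt (B (k - 1)); have := hφpos (A 0); linarith
      _ = π := by ring
  -- arg of product as an angle equals sum of angles
  have hprodne : (∏ i, f i) ≠ 0 := Finset.prod_ne_zero_iff.2 fun i _ => hfne i
  have hangle : (((∏ i, f i).arg : ℝ) : Real.Angle) = ((S : ℝ) : Real.Angle) := by
    have h1 : ∀ (s : Finset (Fin k)), (((∏ i ∈ s, f i).arg : ℝ) : Real.Angle)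
        = ∑ i ∈ s, (((f i).arg : ℝ) : Real.Angle) := by
      intro s
      induction s using Finset.cons_induction with
      | empty => simp
      | cons j s hjs ih =>
        rw [Finset.prod_cons, Finset.sum_cons,
          Complex.arg_mul_coe_angle (hfne j) (Finset.prod_ne_zero_iff.2 fun i _ => hfne i), ih]
    rw [h1, hS, ← Real.Angle.coe_coeHom, map_sum]
    simp only [Real.Angle.coe_coeHom]
    refine Finset.sum_congr rfl fun i _ => ?_
    simp only [hθ, hf, hφ, Real.Angle.coe_sub]
    exact Complex.arg_div_coe_angle (hne (b i)) (hne (a i))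
  -- deduce arg of product equals S
  obtain ⟨n, hn⟩ := Real.Angle.angle_eq_iff_two_pi_dvd_sub.1 hangle
  have hargS : (∏ i, f i).arg = S := by
    have h1 := Complex.neg_pi_lt_arg (∏ i, f i)
    have h2 := Complex.arg_le_pi (∏ i, f i)
    have hn0 : n = 0 := by
      have hlt1 : (n : ℝ) < 1 := by nlinarith
      have hgt1 : (-1 : ℝ) < n := by nlinarith
      have e1 : (-1 : ℤ) < n := by exact_mod_cast hgt1
      have e2 : n < (1 : ℤ) := by exact_mod_cast hlt1
      omega
    rw [hn0] at hn
    push_cast at hn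
    linarith
  -- conclude
  have : 0 < (∏ i, f i).im := by
    have := Complex.norm_mul_sin_arg (∏ i, f i)
    rw [hargS] at this
    rw [← this]
    exact mul_pos (norm_pos_iff.2 hprodne) (Real.sin_pos_of_pos_of_lt_pi hSpos hSlt)
  rw [hf] at this
  exact ne_of_gt this
end

section
/- For complex numbers w₁, w₂ in the open upper half plane with w₁ ≠ w₂, the iterated integral (1/(2πi)²) ∫_{conj(w₁)}^{w₁} ∫_{conj(w₂)}^{w₂} dζ₁ dζ₂ / (ζ₁ - ζ₂)² equals -(1/(4π²)) · log( ((w₁ - w₂)(conj(w₁) - conj(w₂))) / ((w₁ - conj(w₂))(conj(w₁) - w₂)) ), which equals (1/π) · G(w₁, w₂), where G(z, w) = -(1/(2π)) log |(z - w)/(z - conj(w))| is the Green function of the Laplacian on the upper half plane with Dirichlet boundary conditions. -/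
open Complex intervalIntegral

private noncomputable def zeta (w : ℂ) (s : ℝ) : ℂ :=
  (starRingEnd ℂ) w + (s : ℂ) * (w - (starRingEnd ℂ) w)

private lemma zeta_re (w : ℂ) (s : ℝ) : (zeta w s).re = w.re := by
  simp [zeta, Complex.add_re, Complex.mul_re, Complex.sub_re, Complex.sub_im]

private lemma zeta_zero (w : ℂ) : zeta w 0 = (starRingEnd ℂ) w := by
  simp [zeta]

private lemma zeta_one (w : ℂ) : zeta w 1 = w := by
  simp [zeta]

private lemma hasDerivAt_zeta (w : ℂ) (s : ℝ) :
    HasDerivAt (zeta w) (w - (starRingEnd ℂ) w) s := by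
  have hid : HasDerivAt (fun t : ℝ => (t : ℂ)) 1 s := by
    exact Complex.ofRealCLM.hasDerivAt
  have := ((hid.mul_const (w - (starRingEnd ℂ) w)).const_add ((starRingEnd ℂ) w))
  rw [one_mul] at this
  exact this

private lemma continuous_zeta (w : ℂ) : Continuous (zeta w) := by
  unfold zeta; fun_prop

/-- For distinct `w₁, w₂` in the open upper half plane (with paths chosen as the vertical
segments from `conj wⱼ` to `wⱼ`, which avoid the singularity since `Re w₁ ≠ Re w₂`), the
iterated integral `(1/(2πi))² ∫_{conj w₁}^{w₁} ∫_{conj w₂}^{w₂} dζ₁ dζ₂ /(ζ₁-ζ₂)²` equals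
`-(1/(4π²)) log( ((w₁-w₂)(conj w₁-conj w₂)) / ((w₁-conj w₂)(conj w₁-w₂)) )`, which equals
`(1/π) G(w₁,w₂)` with `G(z,w) = -(1/(2π)) log |(z-w)/(z-conj w)|` the half-plane Green
function. -/
theorem stmt3 (w₁ w₂ : ℂ) (h₁ : 0 < w₁.im) (h₂ : 0 < w₂.im) (hne : w₁ ≠ w₂)
    (hre : w₁.re ≠ w₂.re) :
    (1 / (2 * (Real.pi : ℂ) * Complex.I)) ^ 2 *
        (∫ s in (0:ℝ)..1, ∫ t in (0:ℝ)..1,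
          ((w₁ - (starRingEnd ℂ) w₁) * (w₂ - (starRingEnd ℂ) w₂)) /
            ((((starRingEnd ℂ) w₁ + (s : ℂ) * (w₁ - (starRingEnd ℂ) w₁)) -
              ((starRingEnd ℂ) w₂ + (t : ℂ) * (w₂ - (starRingEnd ℂ) w₂))) ^ 2)) =
      -(1 / (4 * (Real.pi : ℂ) ^ 2)) *
        Complex.log (((w₁ - w₂) * ((starRingEnd ℂ) w₁ - (starRingEnd ℂ) w₂)) /
          ((w₁ - (starRingEnd ℂ) w₂) * ((starRingEnd ℂ) w₁ - w₂))) ∧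
    -(1 / (4 * (Real.pi : ℂ) ^ 2)) *
        Complex.log (((w₁ - w₂) * ((starRingEnd ℂ) w₁ - (starRingEnd ℂ) w₂)) /
          ((w₁ - (starRingEnd ℂ) w₂) * ((starRingEnd ℂ) w₁ - w₂))) =
      Complex.ofReal ((1 / Real.pi) *
        (-(1 / (2 * Real.pi)) *
          Real.log ‖(w₁ - w₂) / (w₁ - (starRingEnd ℂ) w₂)‖)) := by
  have hr : w₁.re - w₂.re ≠ 0 := sub_ne_zero.mpr hre
  have hu : w₁ - w₂ ≠ 0 := sub_ne_zero.mpr hne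
  have hvim : 0 < (w₁ - (starRingEnd ℂ) w₂).im := by
    simp only [Complex.sub_im, Complex.conj_im]; linarith
  have hv : w₁ - (starRingEnd ℂ) w₂ ≠ 0 := by
    intro h; rw [h] at hvim; simp at hvim
  -- the sign to rotate the branch of log
  set e : ℝ := if 0 < w₁.re - w₂.re then 1 else -1 with he
  have he1 : e = 1 ∨ e = -1 := by
    rw [he]; split_ifs <;> simp
  have heC : (e : ℂ) ≠ 0 := by
    rcases he1 with h | h <;> simp [h]
  have habse : |e| = 1 := by rcases he1 with h | h <;> simp [h]
  have hepos : ∀ z : ℂ, z.re = w₁.re - w₂.re → 0 < ((e : ℂ) * z).re := by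
    intro z hz
    have h' : ((e : ℂ) * z).re = e * z.re := by
      simp [Complex.mul_re]
    rw [h', hz, he]
    split_ifs with h
    · simpa using h
    · have hlt : w₁.re - w₂.re < 0 := lt_of_le_of_ne (not_lt.mp h) hr
      nlinarith
  have hslit : ∀ z : ℂ, z.re = w₁.re - w₂.re → (e : ℂ) * z ∈ Complex.slitPlane :=
    fun z hz => Or.inl (hepos z hz)
  -- nonvanishing of denominators
  have hne' : ∀ s t : ℝ, zeta w₁ s - zeta w₂ t ≠ 0 := by
    intro s t h
    have : (zeta w₁ s - zeta w₂ t).re = w₁.re - w₂.re := by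
      simp [Complex.sub_re, zeta_re]
    rw [h] at this
    simp only [Complex.zero_re] at this
    exact hr this.symm
  have hd : ∀ s : ℝ, zeta w₁ s - w₂ ≠ 0 := by
    intro s; have := hne' s 1; rwa [zeta_one] at this
  have hc : ∀ s : ℝ, zeta w₁ s - (starRingEnd ℂ) w₂ ≠ 0 := by
    intro s; have := hne' s 0; rwa [zeta_zero] at this
  have hdre : ∀ s : ℝ, (zeta w₁ s - w₂).re = w₁.re - w₂.re := by
    intro s; simp [Complex.sub_re, zeta_re]
  have hcre : ∀ s : ℝ, (zeta w₁ s - (starRingEnd ℂ) w₂).re = w₁.re - w₂.re := by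
    intro s; simp [Complex.sub_re, zeta_re]
  -- inner integral
  have hinner : ∀ s : ℝ,
      (∫ t in (0:ℝ)..1,
        ((w₁ - (starRingEnd ℂ) w₁) * (w₂ - (starRingEnd ℂ) w₂)) /
          ((zeta w₁ s - zeta w₂ t) ^ 2))
      = (w₁ - (starRingEnd ℂ) w₁) * (zeta w₁ s - w₂)⁻¹
        - (w₁ - (starRingEnd ℂ) w₁) * (zeta w₁ s - (starRingEnd ℂ) w₂)⁻¹ := by
    intro s
    have key : ∀ t : ℝ,
        HasDerivAt (fun t : ℝ => (w₁ - (starRingEnd ℂ) w₁) * (zeta w₁ s - zeta w₂ t)⁻¹)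
          (((w₁ - (starRingEnd ℂ) w₁) * (w₂ - (starRingEnd ℂ) w₂)) /
            ((zeta w₁ s - zeta w₂ t) ^ 2)) t := by
      intro t
      have h1 : HasDerivAt (fun t : ℝ => zeta w₁ s - zeta w₂ t)
          (-(w₂ - (starRingEnd ℂ) w₂)) t := (hasDerivAt_zeta w₂ t).const_sub _
      have h1' : HasDerivAt (fun t : ℝ => (zeta w₁ s - zeta w₂ t)⁻¹)
          (-((zeta w₁ s - zeta w₂ t) ^ 2)⁻¹ * -(w₂ - (starRingEnd ℂ) w₂)) t :=
        (hasDerivAt_inv (hne' s t)).comp t h1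
      have h2 := h1'.const_mul (w₁ - (starRingEnd ℂ) w₁)
      convert h2 using 1
      · rfl
      field_simp
    have hcont : IntervalIntegrable
        (fun t : ℝ => ((w₁ - (starRingEnd ℂ) w₁) * (w₂ - (starRingEnd ℂ) w₂)) /
          ((zeta w₁ s - zeta w₂ t) ^ 2)) MeasureTheory.volume 0 1 := by
      apply Continuous.intervalIntegrable
      apply Continuous.div continuous_const
      · exact ((continuous_const.sub (continuous_zeta w₂)).pow 2)
      · exact fun t => pow_ne_zero _ (hne' s t)
    rw [intervalIntegral.integral_eq_sub_of_hasDerivAt (fun t _ => key t) hcont]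
    rw [zeta_one, zeta_zero]
  -- outer integral
  have houter :
      (∫ s in (0:ℝ)..1,
        ((w₁ - (starRingEnd ℂ) w₁) * (zeta w₁ s - w₂)⁻¹
          - (w₁ - (starRingEnd ℂ) w₁) * (zeta w₁ s - (starRingEnd ℂ) w₂)⁻¹))
      = (Complex.log ((e : ℂ) * (w₁ - w₂))
          - Complex.log ((e : ℂ) * (w₁ - (starRingEnd ℂ) w₂)))
        - (Complex.log ((e : ℂ) * ((starRingEnd ℂ) w₁ - w₂))
          - Complex.log ((e : ℂ) * ((starRingEnd ℂ) w₁ - (starRingEnd ℂ) w₂))) := by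
    have key : ∀ s : ℝ,
        HasDerivAt (fun s : ℝ =>
          Complex.log ((e : ℂ) * (zeta w₁ s - w₂))
            - Complex.log ((e : ℂ) * (zeta w₁ s - (starRingEnd ℂ) w₂)))
          ((w₁ - (starRingEnd ℂ) w₁) * (zeta w₁ s - w₂)⁻¹
            - (w₁ - (starRingEnd ℂ) w₁) * (zeta w₁ s - (starRingEnd ℂ) w₂)⁻¹) s := by
      intro s
      have hin1 : HasDerivAt (fun s : ℝ => (e : ℂ) * (zeta w₁ s - w₂))
          ((e : ℂ) * (w₁ - (starRingEnd ℂ) w₁)) s :=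
        ((hasDerivAt_zeta w₁ s).sub_const w₂).const_mul _
      have hin2 : HasDerivAt (fun s : ℝ => (e : ℂ) * (zeta w₁ s - (starRingEnd ℂ) w₂))
          ((e : ℂ) * (w₁ - (starRingEnd ℂ) w₁)) s :=
        ((hasDerivAt_zeta w₁ s).sub_const _).const_mul _
      have hl1 := (Complex.hasDerivAt_log (hslit _ (hdre s))).comp s hin1
      have hl2 := (Complex.hasDerivAt_log (hslit _ (hcre s))).comp s hin2
      have := hl1.sub hl2
      convert this using 1
      · rfl
      · rfl
      have hε : ∀ A : ℂ, A ≠ 0 →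
          ((e : ℂ) * A)⁻¹ * ((e : ℂ) * (w₁ - (starRingEnd ℂ) w₁))
            = (w₁ - (starRingEnd ℂ) w₁) * A⁻¹ := by
        intro A hA
        calc ((e : ℂ) * A)⁻¹ * ((e : ℂ) * (w₁ - (starRingEnd ℂ) w₁))
            = ((e : ℂ)⁻¹ * (e : ℂ)) * ((w₁ - (starRingEnd ℂ) w₁) * A⁻¹) := by
              rw [mul_inv]; ring
          _ = (w₁ - (starRingEnd ℂ) w₁) * A⁻¹ := by rw [inv_mul_cancel₀ heC, one_mul]
      rw [hε _ (hd s), hε _ (hc s)]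
    have hcont : IntervalIntegrable
        (fun s : ℝ => (w₁ - (starRingEnd ℂ) w₁) * (zeta w₁ s - w₂)⁻¹
          - (w₁ - (starRingEnd ℂ) w₁) * (zeta w₁ s - (starRingEnd ℂ) w₂)⁻¹)
        MeasureTheory.volume 0 1 := by
      apply Continuous.intervalIntegrable
      exact (continuous_const.mul
          (Continuous.inv₀ ((continuous_zeta w₁).sub continuous_const) hd)).sub
        (continuous_const.mul
          (Continuous.inv₀ ((continuous_zeta w₁).sub continuous_const) hc))
    rw [intervalIntegral.integral_eq_sub_of_hasDerivAt (fun s _ => key s) hcont]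
    rw [zeta_one, zeta_zero]
  -- identify the sum of logs with the log of the cross ratio, as a real number
  have habs : ‖(e : ℂ) * (w₁ - w₂)‖ = ‖w₁ - w₂‖ := by
    simp [map_mul, habse]
  have habs' : ‖(e : ℂ) * (w₁ - (starRingEnd ℂ) w₂)‖
      = ‖w₁ - (starRingEnd ℂ) w₂‖ := by
    simp [map_mul, habse]
  have hargu : ((e : ℂ) * (w₁ - w₂)).arg ≠ Real.pi := by
    intro h
    have := (Complex.arg_eq_pi_iff.mp h).1
    have := hepos (w₁ - w₂) (by simp [Complex.sub_re])
    linarith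
  have hargv : ((e : ℂ) * (w₁ - (starRingEnd ℂ) w₂)).arg ≠ Real.pi := by
    intro h
    have := (Complex.arg_eq_pi_iff.mp h).1
    have := hepos (w₁ - (starRingEnd ℂ) w₂) (by simp [Complex.sub_re])
    linarith
  have hconj1 : (starRingEnd ℂ) w₁ - (starRingEnd ℂ) w₂ = (starRingEnd ℂ) (w₁ - w₂) := by
    rw [map_sub]
  have hconj2 : (starRingEnd ℂ) w₁ - w₂ = (starRingEnd ℂ) (w₁ - (starRingEnd ℂ) w₂) := by
    rw [map_sub, Complex.conj_conj]
  have hS :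
      (Complex.log ((e : ℂ) * (w₁ - w₂))
          - Complex.log ((e : ℂ) * (w₁ - (starRingEnd ℂ) w₂)))
        - (Complex.log ((e : ℂ) * ((starRingEnd ℂ) w₁ - w₂))
          - Complex.log ((e : ℂ) * ((starRingEnd ℂ) w₁ - (starRingEnd ℂ) w₂)))
      = ((2 * Real.log (‖w₁ - w₂‖)
          - 2 * Real.log (‖w₁ - (starRingEnd ℂ) w₂‖) : ℝ) : ℂ) := by
    rw [hconj1, hconj2]
    have hce : (starRingEnd ℂ) ((e : ℂ)) = (e : ℂ) := Complex.conj_ofReal e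
    have h1 : (e : ℂ) * (starRingEnd ℂ) (w₁ - w₂)
        = (starRingEnd ℂ) ((e : ℂ) * (w₁ - w₂)) := by rw [map_mul, hce]
    have h2 : (e : ℂ) * (starRingEnd ℂ) (w₁ - (starRingEnd ℂ) w₂)
        = (starRingEnd ℂ) ((e : ℂ) * (w₁ - (starRingEnd ℂ) w₂)) := by rw [map_mul, hce]
    rw [h1, h2, Complex.log_conj _ hargu, Complex.log_conj _ hargv]
    have e1 : Complex.log ((e : ℂ) * (w₁ - w₂))
        + (starRingEnd ℂ) (Complex.log ((e : ℂ) * (w₁ - w₂)))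
        = ((2 * Real.log (‖w₁ - w₂‖) : ℝ) : ℂ) := by
      rw [Complex.add_conj, Complex.log_re, habs]
    have e2 : Complex.log ((e : ℂ) * (w₁ - (starRingEnd ℂ) w₂))
        + (starRingEnd ℂ) (Complex.log ((e : ℂ) * (w₁ - (starRingEnd ℂ) w₂)))
        = ((2 * Real.log (‖w₁ - (starRingEnd ℂ) w₂‖) : ℝ) : ℂ) := by
      rw [Complex.add_conj, Complex.log_re, habs']
    push_cast
    push_cast at e1 e2
    linear_combination e1 - e2
  -- the cross ratio is a positive real
  have hX : ((w₁ - w₂) * ((starRingEnd ℂ) w₁ - (starRingEnd ℂ) w₂)) /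
      ((w₁ - (starRingEnd ℂ) w₂) * ((starRingEnd ℂ) w₁ - w₂))
      = ((Complex.normSq (w₁ - w₂) / Complex.normSq (w₁ - (starRingEnd ℂ) w₂) : ℝ) : ℂ) := by
    rw [hconj1, hconj2, Complex.mul_conj, Complex.mul_conj]
    push_cast
    ring
  have hnsu : Complex.normSq (w₁ - w₂) ≠ 0 := by
    simpa [Complex.normSq_eq_zero] using hu
  have hnsv : Complex.normSq (w₁ - (starRingEnd ℂ) w₂) ≠ 0 := by
    simpa [Complex.normSq_eq_zero] using hv
  have hlogX : Complex.log (((w₁ - w₂) * ((starRingEnd ℂ) w₁ - (starRingEnd ℂ) w₂)) /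
      ((w₁ - (starRingEnd ℂ) w₂) * ((starRingEnd ℂ) w₁ - w₂)))
      = ((2 * Real.log (‖w₁ - w₂‖)
          - 2 * Real.log (‖w₁ - (starRingEnd ℂ) w₂‖) : ℝ) : ℂ) := by
    rw [hX, ← Complex.ofReal_log (div_nonneg (Complex.normSq_nonneg _) (Complex.normSq_nonneg _))]
    congr 1
    rw [Real.log_div hnsu hnsv, ← Complex.sq_norm, ← Complex.sq_norm,
      Real.log_pow, Real.log_pow]
    push_cast
    ring
  constructor
  · -- first equality
    have hdouble :
        (∫ s in (0:ℝ)..1, ∫ t in (0:ℝ)..1,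
          ((w₁ - (starRingEnd ℂ) w₁) * (w₂ - (starRingEnd ℂ) w₂)) /
            ((((starRingEnd ℂ) w₁ + (s : ℂ) * (w₁ - (starRingEnd ℂ) w₁)) -
              ((starRingEnd ℂ) w₂ + (t : ℂ) * (w₂ - (starRingEnd ℂ) w₂))) ^ 2))
        = ((2 * Real.log (‖w₁ - w₂‖)
            - 2 * Real.log (‖w₁ - (starRingEnd ℂ) w₂‖) : ℝ) : ℂ) := by
      rw [← hS, ← houter]
      apply intervalIntegral.integral_congr
      intro s _
      exact hinner s
    rw [hdouble, hlogX]
    have hI : (1 / (2 * (Real.pi : ℂ) * Complex.I)) ^ 2 = -(1 / (4 * (Real.pi : ℂ) ^ 2)) := by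
      have : ((2 * (Real.pi : ℂ) * Complex.I)) ^ 2 = -(4 * (Real.pi : ℂ) ^ 2) := by
        rw [mul_pow, mul_pow, Complex.I_sq]; ring
      rw [div_pow, one_pow, this, div_neg]
    rw [hI]
  · -- second equality
    rw [hlogX]
    have habsdiv : ‖(w₁ - w₂) / (w₁ - (starRingEnd ℂ) w₂)‖
        = ‖w₁ - w₂‖ / ‖w₁ - (starRingEnd ℂ) w₂‖ := norm_div _ _
    rw [habsdiv, Real.log_div (norm_ne_zero_iff.mpr hu) (norm_ne_zero_iff.mpr hv)]
    have hpi : (Real.pi : ℂ) ≠ 0 := Complex.ofReal_ne_zero.mpr Real.pi_ne_zero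
    push_cast
    field_simp
    ring
end

section
/- For every integer ℓ ≥ 3 and pairwise distinct complex numbers U_1, ..., U_ℓ, the sum over all cyclic permutations τ of {1, ..., ℓ} (i.e., permutations consisting of a single ℓ-cycle) of the product ∏_{i=1}^ℓ 1/(U_{τ(i)} - U_{τ(i+1)}) equals 0, where indices are taken cyclically (τ(ℓ+1) := τ(1)). -/
open scoped Classical

open Equiv Equiv.Perm Finset

/-- Inserting a fixed point `x₀` into a cycle `c` (right after `a`) yields a cycle whose
support is everything. -/
lemma kenyon_insert {m : ℕ} (x₀ : Fin m) (c : Equiv.Perm (Fin m))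
    (hc : c.IsCycle) (hsupp : c.support = Finset.univ.erase x₀)
    {a : Fin m} (ha : a ∈ c.support) :
    (Equiv.swap x₀ (c a) * c).IsCycle ∧
      (Equiv.swap x₀ (c a) * c).support = Finset.univ := by
  have hx₀ : x₀ ∉ c.support := by rw [hsupp]; exact Finset.notMem_erase _ _
  have hcx₀ : c x₀ = x₀ := by rwa [← Equiv.Perm.notMem_support]
  have hax₀ : a ≠ x₀ := fun h => hx₀ (h ▸ ha)
  have hca : c a ∈ c.support := Equiv.Perm.apply_mem_support.mpr ha
  have hcax₀ : c a ≠ x₀ := fun h => hx₀ (h ▸ hca)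
  set τ := Equiv.swap x₀ (c a) * c with hτdef
  have hτx₀ : τ x₀ = c a := by
    simp [hτdef, Equiv.Perm.mul_apply, hcx₀, Equiv.swap_apply_left]
  have hτa : τ a = x₀ := by simp [hτdef, Equiv.Perm.mul_apply, Equiv.swap_apply_right]
  have hτz : ∀ z, z ≠ x₀ → z ≠ a → τ z = c z := by
    intro z hz1 hz2
    have h1 : c z ≠ x₀ := fun h => hz1 (c.injective (h.trans hcx₀.symm))
    have h2 : c z ≠ c a := fun h => hz2 (c.injective h)
    simp [hτdef, Equiv.Perm.mul_apply, Equiv.swap_apply_of_ne_of_ne h1 h2]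
  have hmem : ∀ z, τ z ≠ z := by
    intro z
    by_cases hz1 : z = x₀
    · subst hz1; rw [hτx₀]; exact hcax₀
    by_cases hz2 : z = a
    · subst hz2; rw [hτa]; exact fun h => hax₀ h.symm
    rw [hτz z hz1 hz2]
    have : z ∈ c.support := by
      rw [hsupp]; exact Finset.mem_erase.mpr ⟨hz1, Finset.mem_univ z⟩
    exact Equiv.Perm.mem_support.mp this
  have key : ∀ k : ℕ, τ.SameCycle x₀ ((c ^ k) (c a)) := by
    intro k
    induction k with
    | zero => exact ⟨1, by simp [hτx₀]⟩
    | succ k ih =>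
        have hz : (c ^ k) (c a) ∈ c.support := by
          rwa [Equiv.Perm.pow_apply_mem_support]
        have hstep : (c ^ (k + 1)) (c a) = c ((c ^ k) (c a)) := by
          rw [pow_succ', Equiv.Perm.mul_apply]
        by_cases hza : (c ^ k) (c a) = a
        · rw [hstep, hza]
          exact ⟨1, by simp [hτx₀]⟩
        · have hzx₀ : (c ^ k) (c a) ≠ x₀ := fun h => hx₀ (h ▸ hz)
          have hstep2 : τ ((c ^ k) (c a)) = c ((c ^ k) (c a)) := hτz _ hzx₀ hza
          rw [hstep]
          exact ih.trans ⟨1, by simpa using hstep2⟩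
  constructor
  · refine ⟨x₀, by rw [hτx₀]; exact hcax₀, fun y hy => ?_⟩
    by_cases hyx₀ : y = x₀
    · subst hyx₀; exact Equiv.Perm.SameCycle.refl _ _
    · have hy' : y ∈ c.support := by
        rw [hsupp]; exact Finset.mem_erase.mpr ⟨hyx₀, Finset.mem_univ y⟩
      obtain ⟨i, hi⟩ := hc.exists_pow_eq (Equiv.Perm.mem_support.mp hca)
        (Equiv.Perm.mem_support.mp hy')
      exact hi ▸ key i
  · ext z
    simp [Equiv.Perm.mem_support, hmem z]

/-- Kenyon's cycle lemma: for `ℓ ≥ 3` and pairwise distinct complex numbers `U`, the sum over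
all permutations consisting of a single `ℓ`-cycle of the cyclic product
`∏ᵢ 1/(U_{τ(i)} - U_{τ(i+1)})` (taken along the cycle of `τ`, i.e. `∏ᵢ 1/(Uᵢ - U_{τ(i)})`)
vanishes. -/
theorem stmt7 (n : ℕ) (U : Fin (n + 3) → ℂ) (hU : Function.Injective U) :
    (∑ τ ∈ Finset.univ.filter
        (fun τ : Equiv.Perm (Fin (n + 3)) => τ.IsCycle ∧ τ.support = Finset.univ),
      ∏ i : Fin (n + 3), 1 / (U i - U (τ i))) = 0 := by
  classical
  set x₀ : Fin (n + 3) := 0 with hx₀def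
  set E : Finset (Fin (n + 3)) := Finset.univ.erase x₀ with hEdef
  set B : Finset (Equiv.Perm (Fin (n + 3))) :=
    Finset.univ.filter (fun c => c.IsCycle ∧ c.support = E) with hBdef
  have hbasic : ∀ τ : Equiv.Perm (Fin (n + 3)), τ.IsCycle → τ.support = Finset.univ →
      τ x₀ ≠ x₀ ∧ τ (τ x₀) ≠ x₀ ∧ τ⁻¹ x₀ ≠ x₀ := by
    intro τ hτ hs
    have h1 : τ x₀ ≠ x₀ :=
      Equiv.Perm.mem_support.mp (hs ▸ Finset.mem_univ x₀)
    have h2 : τ (τ x₀) ≠ x₀ := by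
      intro h2
      have heq := hτ.eq_swap_of_apply_apply_eq_self h1 h2
      have hcard : τ.support.card = 2 := by
        rw [heq, Equiv.Perm.support_swap (Ne.symm h1)]
        rw [Finset.card_insert_of_notMem (by simp [Ne.symm h1]), Finset.card_singleton]
      rw [hs, Finset.card_univ, Fintype.card_fin] at hcard
      omega
    refine ⟨h1, h2, fun h3 => ?_⟩
    have : τ (τ⁻¹ x₀) = x₀ := τ.apply_symm_apply x₀
    rw [h3] at this
    exact h1 this
  have key : (∑ τ ∈ Finset.univ.filter
        (fun τ : Equiv.Perm (Fin (n + 3)) => τ.IsCycle ∧ τ.support = Finset.univ),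
      ∏ i : Fin (n + 3), 1 / (U i - U (τ i))) =
      ∑ p ∈ B ×ˢ E, (∏ i ∈ E, 1 / (U i - U (p.1 i))) *
        (1 / (U p.2 - U x₀) + 1 / (U x₀ - U (p.1 p.2))) := by
    refine Finset.sum_nbij'
      (fun τ => (Equiv.swap x₀ (τ x₀) * τ, τ⁻¹ x₀))
      (fun p => Equiv.swap x₀ (p.1 p.2) * p.1) ?_ ?_ ?_ ?_ ?_
    · -- into B ×ˢ E
      intro τ hτmem
      rw [Finset.mem_filter] at hτmem
      obtain ⟨-, hτ, hs⟩ := hτmem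
      obtain ⟨h1, h2, h3⟩ := hbasic τ hτ hs
      refine Finset.mem_product.mpr ⟨Finset.mem_filter.mpr ⟨Finset.mem_univ _, ?_, ?_⟩,
        Finset.mem_erase.mpr ⟨h3, Finset.mem_univ _⟩⟩
      · exact hτ.swap_mul h1 h2
      · rw [Equiv.Perm.support_swap_mul_eq τ x₀ h2, hs, hEdef,
          Finset.sdiff_singleton_eq_erase]
    · -- back into A
      intro p hp
      rw [Finset.mem_product] at hp
      obtain ⟨hc, haE⟩ := hp
      rw [hBdef, Finset.mem_filter] at hc
      obtain ⟨-, hcyc, hcs⟩ := hc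
      have ha : p.2 ∈ p.1.support := by rw [hcs]; exact haE
      obtain ⟨h1, h2⟩ := kenyon_insert x₀ p.1 hcyc (hEdef ▸ hcs) ha
      exact Finset.mem_filter.mpr ⟨Finset.mem_univ _, h1, h2⟩
    · -- left inverse
      intro τ hτmem
      have hca : (Equiv.swap x₀ (τ x₀) * τ) (τ⁻¹ x₀) = τ x₀ := by
        simp [Equiv.Perm.mul_apply, Equiv.swap_apply_left]
      simp only [hca]
      rw [← mul_assoc, Equiv.swap_mul_self, one_mul]
    · -- right inverse
      intro p hp
      rw [Finset.mem_product] at hp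
      obtain ⟨hc, haE⟩ := hp
      rw [hBdef, Finset.mem_filter] at hc
      obtain ⟨-, hcyc, hcs⟩ := hc
      have hx₀s : x₀ ∉ p.1.support := by rw [hcs, hEdef]; exact Finset.notMem_erase _ _
      have hcx₀ : p.1 x₀ = x₀ := by rwa [← Equiv.Perm.notMem_support]
      have hτx₀ : (Equiv.swap x₀ (p.1 p.2) * p.1) x₀ = p.1 p.2 := by
        simp [Equiv.Perm.mul_apply, hcx₀, Equiv.swap_apply_left]
      have hτa : (Equiv.swap x₀ (p.1 p.2) * p.1) p.2 = x₀ := by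
        simp [Equiv.Perm.mul_apply, Equiv.swap_apply_right]
      have hinv : (Equiv.swap x₀ (p.1 p.2) * p.1)⁻¹ x₀ = p.2 := by
        rw [← hτa]; simp
      refine Prod.ext ?_ hinv
      simp only [hτx₀]
      rw [← mul_assoc, Equiv.swap_mul_self, one_mul]
    · -- terms agree
      intro τ hτmem
      rw [Finset.mem_filter] at hτmem
      obtain ⟨-, hτ, hs⟩ := hτmem
      obtain ⟨h1, h2, h3⟩ := hbasic τ hτ hs
      dsimp only
      set c := Equiv.swap x₀ (τ x₀) * τ with hcdef
      set a := τ⁻¹ x₀ with hadef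
      have hτa : τ a = x₀ := τ.apply_symm_apply x₀
      have hca : c a = τ x₀ := by
        simp [hcdef, hadef, Equiv.Perm.mul_apply, Equiv.swap_apply_left]
      have haE : a ∈ E := Finset.mem_erase.mpr ⟨h3, Finset.mem_univ _⟩
      have haτx₀ : a ≠ τ x₀ := by
        intro h
        apply h2
        rw [← h, hτa]
      -- product decomposition for τ
      have hprodτ : (∏ i : Fin (n + 3), 1 / (U i - U (τ i))) =
          (1 / (U x₀ - U (τ x₀))) * ((1 / (U a - U x₀)) *
            ∏ i ∈ E.erase a, 1 / (U i - U (τ i))) := by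
        rw [← Finset.mul_prod_erase Finset.univ _ (Finset.mem_univ x₀), ← hEdef,
          ← Finset.mul_prod_erase E _ haE, hτa]
      -- product decomposition for c
      have hprodc : (∏ i ∈ E, 1 / (U i - U (c i))) =
          (1 / (U a - U (τ x₀))) * ∏ i ∈ E.erase a, 1 / (U i - U (τ i)) := by
        rw [← Finset.mul_prod_erase E _ haE, hca]
        congr 1
        refine Finset.prod_congr rfl fun z hz => ?_
        have hza : z ≠ a := (Finset.mem_erase.mp hz).1
        have hzx₀ : z ≠ x₀ := (Finset.mem_erase.mp (Finset.mem_erase.mp hz).2).1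
        have hτz1 : τ z ≠ x₀ := by
          intro h
          apply hza
          rw [hadef, ← h]; exact (τ.symm_apply_apply z).symm
        have hτz2 : τ z ≠ τ x₀ := fun h => hzx₀ (τ.injective h)
        rw [hcdef]
        simp [Equiv.Perm.mul_apply, Equiv.swap_apply_of_ne_of_ne hτz1 hτz2]
      rw [hca, hprodτ, hprodc]
      have hx1 : U a - U x₀ ≠ 0 := sub_ne_zero.mpr (fun h => h3 (hU h))
      have hx2 : U x₀ - U (τ x₀) ≠ 0 := sub_ne_zero.mpr (fun h => h1 (hU h).symm)
      have hx3 : U a - U (τ x₀) ≠ 0 := sub_ne_zero.mpr (fun h => haτx₀ (hU h))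
      have hid : (1 / (U x₀ - U (τ x₀))) * (1 / (U a - U x₀)) =
          (1 / (U a - U (τ x₀))) * (1 / (U a - U x₀) + 1 / (U x₀ - U (τ x₀))) := by
        field_simp
        ring
      linear_combination (∏ i ∈ E.erase a, 1 / (U i - U (τ i))) * hid
  rw [key, Finset.sum_product]
  refine Finset.sum_eq_zero fun c hc => ?_
  dsimp only
  rw [hBdef, Finset.mem_filter] at hc
  obtain ⟨-, hcyc, hcs⟩ := hc
  rw [← Finset.mul_sum]
  have hsum : (∑ a ∈ E, (1 / (U a - U x₀) + 1 / (U x₀ - U (c a)))) = 0 := by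
    rw [Finset.sum_add_distrib]
    have hcomp : (∑ a ∈ E, 1 / (U x₀ - U (c a))) = ∑ a ∈ E, 1 / (U x₀ - U a) := by
      refine Equiv.Perm.sum_comp c E (fun b => 1 / (U x₀ - U b)) fun z hz => ?_
      simp only [Set.mem_setOf_eq] at hz
      rw [Finset.mem_coe, ← hcs]
      exact Equiv.Perm.mem_support.mpr hz
    rw [hcomp, ← Finset.sum_add_distrib]
    refine Finset.sum_eq_zero fun a _ => ?_
    rw [← neg_sub (U a) (U x₀), div_neg, add_neg_cancel]
  rw [hsum, mul_zero]
end

section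
/- Define the action S(w; χ, η) = (w - χ) Log(w - χ) - (w - χ + 1 - η) Log(w - χ + 1 - η) + (1 - η) log(1 - η) + ∑_{i=1}^k [(b_i - w) Log(b_i - w) - (a_i - w) Log(a_i - w)], for w in the open upper half plane, real parameters a_1 < b_1 < ... < a_k < b_k with ∑(b_i - a_i) = 1, and real χ, η with 0 < η < 1. Then a point w ∈ ℍ satisfies ∂S/∂w (w; χ, η) = 0 if and only if (w - χ) ∏_{i=1}^k (w - a_i) = (w - χ + 1 - η) ∏_{i=1}^k (w - b_i). -/
open Complex Finset

lemma ratio_mono {x₁ x₂ y : ℝ} (hy : y ≠ 0) (hx : x₁ < x₂) :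
    x₁ / Real.sqrt (x₁^2 + y^2) < x₂ / Real.sqrt (x₂^2 + y^2) := by
  have hy2 : 0 < y ^ 2 := by positivity
  have hs₁ : 0 < Real.sqrt (x₁^2 + y^2) := Real.sqrt_pos.2 (by positivity)
  have hs₂ : 0 < Real.sqrt (x₂^2 + y^2) := Real.sqrt_pos.2 (by positivity)
  have h₁ : (Real.sqrt (x₁^2 + y^2))^2 = x₁^2 + y^2 := Real.sq_sqrt (by positivity)
  have h₂ : (Real.sqrt (x₂^2 + y^2))^2 = x₂^2 + y^2 := Real.sq_sqrt (by positivity)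
  set s₁ := Real.sqrt (x₁^2 + y^2)
  set s₂ := Real.sqrt (x₂^2 + y^2)
  rw [div_lt_div_iff₀ hs₁ hs₂]
  rcases le_or_gt x₂ 0 with h2 | h2
  · have hx1 : x₁ < 0 := lt_of_lt_of_le hx h2
    have hApB : x₁ * s₂ + x₂ * s₁ < 0 := by
      have := mul_neg_of_neg_of_pos hx1 hs₂
      have := mul_nonpos_of_nonpos_of_nonneg h2 hs₁.le
      linarith
    have hx2 : x₂ ^ 2 < x₁ ^ 2 := by nlinarith
    nlinarith [h₁, h₂, hApB, hx2]
  · rcases le_or_gt x₁ 0 with h1 | h1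
    · have : x₁ * s₂ ≤ 0 := mul_nonpos_of_nonpos_of_nonneg h1 hs₂.le
      have : 0 < x₂ * s₁ := mul_pos h2 hs₁
      linarith
    · have hApB : 0 < x₁ * s₂ + x₂ * s₁ := by positivity
      have hx2 : x₁ ^ 2 < x₂ ^ 2 := by nlinarith
      nlinarith [h₁, h₂, hApB, hx2]

lemma cos_arg_lt {z₁ z₂ : ℂ} (him : z₁.im = z₂.im) (h0 : z₂.im ≠ 0)
    (hre : z₁.re < z₂.re) : Real.cos z₁.arg < Real.cos z₂.arg := by
  have h1 : z₁.im ≠ 0 := him ▸ h0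
  have hz₁ : z₁ ≠ 0 := fun h => h1 (by simp [h])
  have hz₂ : z₂ ≠ 0 := fun h => h0 (by simp [h])
  rw [Complex.cos_arg hz₁, Complex.cos_arg hz₂]
  have e1 : ‖z₁‖ = Real.sqrt (z₁.re^2 + z₁.im^2) := by
    rw [Complex.norm_def, Complex.normSq_apply]; ring_nf
  have e2 : ‖z₂‖ = Real.sqrt (z₂.re^2 + z₂.im^2) := by
    rw [Complex.norm_def, Complex.normSq_apply]; ring_nf
  rw [e1, e2, him]
  exact ratio_mono h0 hre

/-- lower half plane: arg strictly increasing in re -/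
lemma arg_mono_lower {z₁ z₂ : ℂ} (him : z₁.im = z₂.im) (h0 : z₂.im < 0)
    (hre : z₁.re < z₂.re) : z₁.arg < z₂.arg := by
  have h1 : z₁.im < 0 := him ▸ h0
  have hcos := cos_arg_lt him h0.ne hre
  by_contra hle
  push_neg at hle
  have m₁ : -z₁.arg ∈ Set.Icc 0 Real.pi :=
    ⟨by linarith [Complex.arg_neg_iff.2 h1], by linarith [Complex.neg_pi_lt_arg z₁]⟩
  have m₂ : -z₂.arg ∈ Set.Icc 0 Real.pi :=
    ⟨by linarith [Complex.arg_neg_iff.2 h0], by linarith [Complex.neg_pi_lt_arg z₂]⟩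
  have := Real.strictAntiOn_cos.antitoneOn m₁ m₂ (neg_le_neg hle)
  rw [Real.cos_neg, Real.cos_neg] at this
  linarith

/-- upper half plane: arg strictly decreasing in re -/
lemma arg_mono_upper {z₁ z₂ : ℂ} (him : z₁.im = z₂.im) (h0 : 0 < z₂.im)
    (hre : z₁.re < z₂.re) : z₂.arg < z₁.arg := by
  have h1 : 0 < z₁.im := him ▸ h0
  have hcos := cos_arg_lt him h0.ne' hre
  by_contra hle
  push_neg at hle
  have m₁ : z₁.arg ∈ Set.Icc 0 Real.pi :=
    ⟨Complex.arg_nonneg_iff.2 h1.le, Complex.arg_le_pi z₁⟩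
  have m₂ : z₂.arg ∈ Set.Icc 0 Real.pi :=
    ⟨Complex.arg_nonneg_iff.2 h0.le, Complex.arg_le_pi z₂⟩
  have := Real.strictAntiOn_cos.antitoneOn m₁ m₂ hle
  linarith

lemma telescope_lower (G H : ℕ → ℝ) : ∀ n, 0 < n → (∀ i, i + 1 < n → H i < G (i+1)) →
    G 0 - H (n-1) ≤ ∑ i ∈ Finset.range n, (G i - H i) := by
  intro n
  induction n with
  | zero => simp
  | succ m ih =>
    intro _ hlt
    rcases Nat.eq_zero_or_pos m with rfl | hm
    · simp
    · rw [Finset.sum_range_succ]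
      have h1 := ih hm (fun i hi => hlt i (by omega))
      have h2 : H (m-1) < G (m - 1 + 1) := hlt (m-1) (by omega)
      have he : m - 1 + 1 = m := Nat.succ_pred_eq_of_pos hm
      rw [he] at h2
      simp only [Nat.add_sub_cancel]
      linarith

/-- A point `w` in the open upper half plane is a critical point of the action
`S(w;χ,η) = (w-χ)Log(w-χ) - (w-χ+1-η)Log(w-χ+1-η) + (1-η)log(1-η)
            + ∑ᵢ [(bᵢ-w)Log(bᵢ-w) - (aᵢ-w)Log(aᵢ-w)]`
if and only if `(w-χ)∏ᵢ(w-aᵢ) = (w-χ+1-η)∏ᵢ(w-bᵢ)`. -/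
theorem stmt10 (k : ℕ) (hk : 0 < k) (a b : Fin k → ℝ)
    (hab : ∀ i, a i < b i) (hba : ∀ i j : Fin k, i < j → b i < a j)
    (hsum : ∑ i, (b i - a i) = 1)
    (χ η : ℝ) (hη0 : 0 < η) (hη1 : η < 1)
    (w : ℂ) (hw : 0 < w.im) :
    deriv (fun u : ℂ =>
        (u - (χ : ℂ)) * Complex.log (u - (χ : ℂ)) -
          (u - (χ : ℂ) + 1 - (η : ℂ)) * Complex.log (u - (χ : ℂ) + 1 - (η : ℂ)) +
          (((1 - η) * Real.log (1 - η) : ℝ) : ℂ) +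
          ∑ i, (((b i : ℂ) - u) * Complex.log ((b i : ℂ) - u) -
            ((a i : ℂ) - u) * Complex.log ((a i : ℂ) - u))) w = 0 ↔
      (w - (χ : ℂ)) * ∏ i, (w - (a i : ℂ)) =
        (w - (χ : ℂ) + 1 - (η : ℂ)) * ∏ i, (w - (b i : ℂ)) := by
  have hwne : w.im ≠ 0 := hw.ne'
  have hπ := Real.pi_pos
  -- basic imaginary-part facts
  have hz₁im : (w - (χ:ℂ)).im = w.im := by simp
  have hz₂im : (w - (χ:ℂ) + 1 - (η:ℂ)).im = w.im := by simp
  have haim : ∀ i : Fin k, (((a i : ℂ)) - w).im = -w.im := by intro i; simp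
  have hbim : ∀ i : Fin k, (((b i : ℂ)) - w).im = -w.im := by intro i; simp
  have hz₁slit : (w - (χ:ℂ)) ∈ Complex.slitPlane := Or.inr (by rw [hz₁im]; exact hwne)
  have hz₂slit : (w - (χ:ℂ) + 1 - (η:ℂ)) ∈ Complex.slitPlane := Or.inr (by rw [hz₂im]; exact hwne)
  have haslit : ∀ i : Fin k, ((a i : ℂ) - w) ∈ Complex.slitPlane := fun i =>
    Or.inr (by rw [haim i]; simpa using hwne)
  have hbslit : ∀ i : Fin k, ((b i : ℂ) - w) ∈ Complex.slitPlane := fun i =>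
    Or.inr (by rw [hbim i]; simpa using hwne)
  have hz₁ne : (w - (χ:ℂ)) ≠ 0 := Complex.slitPlane_ne_zero hz₁slit
  have hz₂ne : (w - (χ:ℂ) + 1 - (η:ℂ)) ≠ 0 := Complex.slitPlane_ne_zero hz₂slit
  have hane : ∀ i : Fin k, ((a i : ℂ) - w) ≠ 0 := fun i => Complex.slitPlane_ne_zero (haslit i)
  have hbne : ∀ i : Fin k, ((b i : ℂ) - w) ≠ 0 := fun i => Complex.slitPlane_ne_zero (hbslit i)
  -- the derivative
  set L : ℂ := Complex.log (w - (χ:ℂ)) + ∑ i, Complex.log ((a i : ℂ) - w) with hL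
  set R : ℂ := Complex.log (w - (χ:ℂ) + 1 - (η:ℂ)) + ∑ i, Complex.log ((b i : ℂ) - w) with hR
  have hid : HasDerivAt (fun u : ℂ => u - (χ:ℂ)) 1 w := (hasDerivAt_id w).sub_const _
  have hid2 : HasDerivAt (fun u : ℂ => u - (χ:ℂ) + 1 - (η:ℂ)) 1 w :=
    (((hasDerivAt_id w).sub_const (χ:ℂ)).add_const 1).sub_const (η:ℂ)
  have h1 : HasDerivAt (fun u : ℂ => (u - (χ:ℂ)) * Complex.log (u - (χ:ℂ)))
      (1 * Complex.log (w - (χ:ℂ)) + (w - (χ:ℂ)) * (1 / (w - (χ:ℂ)))) w :=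
    hid.mul (hid.clog hz₁slit)
  have h2 : HasDerivAt
      (fun u : ℂ => (u - (χ:ℂ) + 1 - (η:ℂ)) * Complex.log (u - (χ:ℂ) + 1 - (η:ℂ)))
      (1 * Complex.log (w - (χ:ℂ) + 1 - (η:ℂ)) +
        (w - (χ:ℂ) + 1 - (η:ℂ)) * (1 / (w - (χ:ℂ) + 1 - (η:ℂ)))) w :=
    hid2.mul (hid2.clog hz₂slit)
  have hsum' : HasDerivAt (fun u : ℂ => ∑ i, (((b i : ℂ) - u) * Complex.log ((b i : ℂ) - u) -
      ((a i : ℂ) - u) * Complex.log ((a i : ℂ) - u)))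
      (∑ i, (((-1) * Complex.log ((b i : ℂ) - w) + ((b i : ℂ) - w) * ((-1) / ((b i : ℂ) - w))) -
        ((-1) * Complex.log ((a i : ℂ) - w) + ((a i : ℂ) - w) * ((-1) / ((a i : ℂ) - w))))) w := by
    apply HasDerivAt.fun_sum
    intro i _
    have hidb : HasDerivAt (fun u : ℂ => (b i : ℂ) - u) (-1) w := (hasDerivAt_id w).const_sub _
    have hida : HasDerivAt (fun u : ℂ => (a i : ℂ) - u) (-1) w := (hasDerivAt_id w).const_sub _
    exact (hidb.mul (hidb.clog (hbslit i))).sub (hida.mul (hida.clog (haslit i)))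
  have hD : HasDerivAt (fun u : ℂ =>
        (u - (χ : ℂ)) * Complex.log (u - (χ : ℂ)) -
          (u - (χ : ℂ) + 1 - (η : ℂ)) * Complex.log (u - (χ : ℂ) + 1 - (η : ℂ)) +
          (((1 - η) * Real.log (1 - η) : ℝ) : ℂ) +
          ∑ i, (((b i : ℂ) - u) * Complex.log ((b i : ℂ) - u) -
            ((a i : ℂ) - u) * Complex.log ((a i : ℂ) - u)))
      ((1 * Complex.log (w - (χ:ℂ)) + (w - (χ:ℂ)) * (1 / (w - (χ:ℂ))) -
        (1 * Complex.log (w - (χ:ℂ) + 1 - (η:ℂ)) +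
          (w - (χ:ℂ) + 1 - (η:ℂ)) * (1 / (w - (χ:ℂ) + 1 - (η:ℂ))))) +
        ∑ i, (((-1) * Complex.log ((b i : ℂ) - w) + ((b i : ℂ) - w) * ((-1) / ((b i : ℂ) - w))) -
        ((-1) * Complex.log ((a i : ℂ) - w) + ((a i : ℂ) - w) * ((-1) / ((a i : ℂ) - w))))) w :=
    ((h1.sub h2).add_const _).add hsum'
  have hDeq : (1 * Complex.log (w - (χ:ℂ)) + (w - (χ:ℂ)) * (1 / (w - (χ:ℂ))) -
        (1 * Complex.log (w - (χ:ℂ) + 1 - (η:ℂ)) +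
          (w - (χ:ℂ) + 1 - (η:ℂ)) * (1 / (w - (χ:ℂ) + 1 - (η:ℂ))))) +
        ∑ i, (((-1) * Complex.log ((b i : ℂ) - w) + ((b i : ℂ) - w) * ((-1) / ((b i : ℂ) - w))) -
        ((-1) * Complex.log ((a i : ℂ) - w) + ((a i : ℂ) - w) * ((-1) / ((a i : ℂ) - w))))
      = L - R := by
    have e : ∀ i : Fin k,
        (((-1) * Complex.log ((b i : ℂ) - w) + ((b i : ℂ) - w) * ((-1) / ((b i : ℂ) - w))) -
          ((-1) * Complex.log ((a i : ℂ) - w) + ((a i : ℂ) - w) * ((-1) / ((a i : ℂ) - w))))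
        = Complex.log ((a i : ℂ) - w) - Complex.log ((b i : ℂ) - w) := by
      intro i
      rw [mul_div_assoc', mul_div_assoc', mul_comm ((b i : ℂ) - w) (-1),
        mul_comm ((a i : ℂ) - w) (-1), mul_div_assoc, mul_div_assoc,
        div_self (hbne i), div_self (hane i)]
      ring
    rw [Finset.sum_congr rfl (fun i _ => e i), Finset.sum_sub_distrib,
      mul_div_assoc', mul_comm (w - (χ:ℂ)) 1, mul_div_assoc, div_self hz₁ne,
      mul_div_assoc', mul_comm (w - (χ:ℂ) + 1 - (η:ℂ)) 1, mul_div_assoc, div_self hz₂ne,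
      hL, hR]
    ring
  have key : deriv (fun u : ℂ =>
        (u - (χ : ℂ)) * Complex.log (u - (χ : ℂ)) -
          (u - (χ : ℂ) + 1 - (η : ℂ)) * Complex.log (u - (χ : ℂ) + 1 - (η : ℂ)) +
          (((1 - η) * Real.log (1 - η) : ℝ) : ℂ) +
          ∑ i, (((b i : ℂ) - u) * Complex.log ((b i : ℂ) - u) -
            ((a i : ℂ) - u) * Complex.log ((a i : ℂ) - u))) w = L - R := by
    rw [hD.deriv]; exact hDeq
  rw [key]
  -- exp computations
  have hexpL : Complex.exp L = (w - (χ:ℂ)) * ∏ i, ((a i : ℂ) - w) := by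
    rw [hL, Complex.exp_add, Complex.exp_log hz₁ne, Complex.exp_sum]
    congr 1
    exact Finset.prod_congr rfl fun i _ => Complex.exp_log (hane i)
  have hexpR : Complex.exp R = (w - (χ:ℂ) + 1 - (η:ℂ)) * ∏ i, ((b i : ℂ) - w) := by
    rw [hR, Complex.exp_add, Complex.exp_log hz₂ne, Complex.exp_sum]
    congr 1
    exact Finset.prod_congr rfl fun i _ => Complex.exp_log (hbne i)
  have hconv : ∀ c : Fin k → ℝ, ∏ i, (w - (c i : ℂ)) = (-1:ℂ)^k * ∏ i, ((c i : ℂ) - w) := by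
    intro c
    calc ∏ i, (w - (c i : ℂ)) = ∏ i : Fin k, ((-1:ℂ) * ((c i : ℂ) - w)) :=
          Finset.prod_congr rfl (fun i _ => by ring)
      _ = (∏ _i : Fin k, (-1:ℂ)) * ∏ i, ((c i : ℂ) - w) := Finset.prod_mul_distrib
      _ = (-1:ℂ)^k * ∏ i, ((c i : ℂ) - w) := by
          rw [Finset.prod_const, Finset.card_univ, Fintype.card_fin]
  constructor
  · intro h
    have hLR : Complex.exp L = Complex.exp R := by rw [sub_eq_zero.mp h]
    rw [hexpL, hexpR] at hLR
    rw [hconv a, hconv b]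
    linear_combination ((-1:ℂ)^k) * hLR
  · intro hProd
    rw [hconv a, hconv b] at hProd
    have hP : (w - (χ:ℂ)) * ∏ i, ((a i : ℂ) - w)
        = (w - (χ:ℂ) + 1 - (η:ℂ)) * ∏ i, ((b i : ℂ) - w) :=
      mul_left_cancel₀ (pow_ne_zero k (by norm_num : (-1:ℂ) ≠ 0))
        (by linear_combination hProd)
    have hexp : Complex.exp L = Complex.exp R := by rw [hexpL, hexpR]; exact hP
    obtain ⟨n, hn⟩ := Complex.exp_eq_exp_iff_exists_int.mp hexp
    -- imaginary parts
    have hLim : L.im = (w - (χ:ℂ)).arg + ∑ i, ((a i : ℂ) - w).arg := by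
      rw [hL, Complex.add_im, Complex.log_im, Complex.im_sum]
      congr 1
      exact Finset.sum_congr rfl fun i _ => Complex.log_im _
    have hRim : R.im = (w - (χ:ℂ) + 1 - (η:ℂ)).arg + ∑ i, ((b i : ℂ) - w).arg := by
      rw [hR, Complex.add_im, Complex.log_im, Complex.im_sum]
      congr 1
      exact Finset.sum_congr rfl fun i _ => Complex.log_im _
    have himdiff : L.im - R.im = (n : ℝ) * (2 * Real.pi) := by
      rw [hn, Complex.add_im, Complex.mul_im]
      simp
    -- bounds on the argument differences
    have hre₁ : (w - (χ:ℂ)).re < (w - (χ:ℂ) + 1 - (η:ℂ)).re := by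
      simp only [Complex.sub_re, Complex.add_re, Complex.one_re, Complex.ofReal_re]
      linarith
    have hupper := arg_mono_upper (z₁ := w - (χ:ℂ)) (z₂ := w - (χ:ℂ) + 1 - (η:ℂ))
      (by rw [hz₁im, hz₂im]) (by rw [hz₂im]; exact hw) hre₁
    have hα2pos : 0 < (w - (χ:ℂ) + 1 - (η:ℂ)).arg := by
      rcases lt_or_eq_of_le (Complex.arg_nonneg_iff.2 (by rw [hz₂im]; exact hw.le)) with h | h
      · exact h
      · exfalso
        have := (Complex.arg_eq_zero_iff.1 h.symm).2
        rw [hz₂im] at this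
        exact hwne this
    have hα1lt : (w - (χ:ℂ)).arg < Real.pi :=
      Complex.arg_lt_pi_iff.2 (Or.inr (by rw [hz₁im]; exact hwne))
    have hgh : ∀ i : Fin k, ((a i : ℂ) - w).arg < ((b i : ℂ) - w).arg := fun i =>
      arg_mono_lower (by rw [haim i, hbim i]) (by rw [hbim i]; linarith)
        (by simp only [Complex.sub_re, Complex.ofReal_re]; linarith [hab i])
    -- the sums of argument differences
    have hnonempty : Nonempty (Fin k) := ⟨⟨0, hk⟩⟩
    have hupper_sum : ∑ i : Fin k, (((a i : ℂ) - w).arg - ((b i : ℂ) - w).arg) < 0 := by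
      have := Finset.sum_lt_sum_of_nonempty (Finset.univ_nonempty (α := Fin k))
        (f := fun i : Fin k => (((a i : ℂ) - w).arg - ((b i : ℂ) - w).arg))
        (g := fun _ : Fin k => (0:ℝ)) (fun i _ => sub_neg.2 (hgh i))
      simpa using this
    -- lower bound via telescoping
    have hlow : -Real.pi < ∑ i : Fin k, (((a i : ℂ) - w).arg - ((b i : ℂ) - w).arg) := by
      classical
      set G : ℕ → ℝ := fun n => if h : n < k then ((a ⟨n, h⟩ : ℂ) - w).arg else 0 with hG
      set H : ℕ → ℝ := fun n => if h : n < k then ((b ⟨n, h⟩ : ℂ) - w).arg else 0 with hH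
      have hsum_eq : ∑ i : Fin k, (((a i : ℂ) - w).arg - ((b i : ℂ) - w).arg)
          = ∑ i ∈ Finset.range k, (G i - H i) := by
        rw [← Fin.sum_univ_eq_sum_range]
        refine Finset.sum_congr rfl fun i _ => ?_
        simp [hG, hH, i.isLt]
      have hstep : ∀ i, i + 1 < k → H i < G (i + 1) := by
        intro i hi
        simp only [hG, hH]
        rw [dif_pos (by omega : i < k), dif_pos hi]
        refine arg_mono_lower (by simp) (by simp; linarith) ?_
        simp only [Complex.sub_re, Complex.ofReal_re]
        have := hba ⟨i, by omega⟩ ⟨i + 1, hi⟩ (by simp)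
        linarith
      have htel := telescope_lower G H k hk hstep
      have hG0 : -Real.pi < G 0 := by
        simp only [hG]
        rw [dif_pos hk]; exact Complex.neg_pi_lt_arg _
      have hHlast : H (k - 1) < 0 := by
        simp only [hH]
        rw [dif_pos (by omega : k - 1 < k)]
        exact Complex.arg_neg_iff.2 (by simp; linarith)
      rw [hsum_eq]
      linarith
    -- conclude n = 0
    have hsplit : L.im - R.im = ((w - (χ:ℂ)).arg - (w - (χ:ℂ) + 1 - (η:ℂ)).arg)
        + ∑ i : Fin k, (((a i : ℂ) - w).arg - ((b i : ℂ) - w).arg) := by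
      rw [hLim, hRim, Finset.sum_sub_distrib]
      ring
    have hband : -Real.pi < L.im - R.im ∧ L.im - R.im < Real.pi := by
      constructor
      · rw [hsplit]; linarith
      · rw [hsplit]; linarith
    have hn0 : n = 0 := by
      rcases lt_trichotomy n 0 with h | h | h
      · exfalso
        have : (n:ℝ) ≤ -1 := by exact_mod_cast Int.le_sub_one_of_lt h
        nlinarith [hband.1, himdiff]
      · exact h
      · exfalso
        have : (1:ℝ) ≤ (n:ℝ) := by exact_mod_cast h
        nlinarith [hband.2, himdiff]
    rw [hn0] at hn
    simp at hn
    rw [hn]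
    ring
end

section
/- Suppose the function w(χ, η) with values in the upper half plane satisfies identically the algebraic equation (w - χ) ∏_{i=1}^k (w - a_i) = (w - χ + 1 - η) ∏_{i=1}^k (w - b_i) on an open set where it is continuously differentiable, with 0 < η < 1. Then its partial derivatives w_χ and w_η cannot both vanish at any point; in fact they satisfy the complex Burgers equation ((w - χ)/(1 - η)) · w_χ = -w_η, so if w_χ = 0 then w_η = 0 forces w = χ, contradicting Im w > 0. -/
open Complex

/-- If `w(χ,η)`, taking values in the open upper half plane, is `C¹` on an open set where
`0 < η < 1` and satisfies the algebraic equation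
`(w-χ)∏ᵢ(w-aᵢ) = (w-χ+1-η)∏ᵢ(w-bᵢ)` identically, then `w` satisfies the complex Burgers
equation `((w-χ)/(1-η))·w__χ = -w_η`, and its partial derivatives cannot both vanish. -/
theorem stmt12 (k : ℕ) (hk : 0 < k) (a b : Fin k → ℝ)
    (hab : ∀ i, a i < b i) (hba : ∀ i j : Fin k, i < j → b i < a j)
    (hsum : ∑ i, (b i - a i) = 1)
    (D : Set (ℝ × ℝ)) (hD : IsOpen D)
    (w : ℝ × ℝ → ℂ) (hC1 : ContDiffOn ℝ 1 w D)
    (him : ∀ p ∈ D, 0 < (w p).im)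
    (hη : ∀ p ∈ D, 0 < p.2 ∧ p.2 < 1)
    (halg : ∀ p ∈ D, (w p - (p.1 : ℂ)) * ∏ i, (w p - (a i : ℂ)) =
      (w p - (p.1 : ℂ) + 1 - (p.2 : ℂ)) * ∏ i, (w p - (b i : ℂ))) :
    ∀ p ∈ D,
      ((w p - (p.1 : ℂ)) / (1 - (p.2 : ℂ))) * fderiv ℝ w p (1, 0) =
        -(fderiv ℝ w p (0, 1)) ∧
      ¬(fderiv ℝ w p (1, 0) = 0 ∧ fderiv ℝ w p (0, 1) = 0) := by
  intro p hp
  -- differentiability of w at p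
  have hwdiff : DifferentiableAt ℝ w p :=
    (hC1.contDiffAt (hD.mem_nhds hp)).differentiableAt one_ne_zero
  set L : ℝ × ℝ →L[ℝ] ℂ := fderiv ℝ w p with hL
  have hw : HasFDerivAt w L p := hwdiff.hasFDerivAt
  -- derivatives of coordinate functions
  set Cχ : ℝ × ℝ →L[ℝ] ℂ := Complex.ofRealCLM.comp (ContinuousLinearMap.fst ℝ ℝ ℝ) with hCχ
  set Cη : ℝ × ℝ →L[ℝ] ℂ := Complex.ofRealCLM.comp (ContinuousLinearMap.snd ℝ ℝ ℝ) with hCη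
  have hχ : HasFDerivAt (fun q : ℝ × ℝ => ((q.1 : ℝ) : ℂ)) Cχ p := Cχ.hasFDerivAt
  have hη2 : HasFDerivAt (fun q : ℝ × ℝ => ((q.2 : ℝ) : ℂ)) Cη p := Cη.hasFDerivAt
  -- derivatives of the products
  set W := w p with hW
  set A := ∏ i, (W - (a i : ℂ)) with hA
  set B := ∏ i, (W - (b i : ℂ)) with hB
  set SA := ∑ i, ∏ j ∈ Finset.univ.erase i, (W - (a j : ℂ)) with hSA
  set SB := ∑ i, ∏ j ∈ Finset.univ.erase i, (W - (b j : ℂ)) with hSB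
  have hAd : HasFDerivAt (fun q => ∏ i, (w q - (a i : ℂ))) (SA • L) p := by
    have := HasFDerivAt.finset_prod (u := Finset.univ)
      (g := fun i q => w q - (a i : ℂ)) (g' := fun _ => L)
      (fun i _ => hw.sub_const _)
    simpa [← Finset.sum_smul] using this
  have hBd : HasFDerivAt (fun q => ∏ i, (w q - (b i : ℂ))) (SB • L) p := by
    have := HasFDerivAt.finset_prod (u := Finset.univ)
      (g := fun i q => w q - (b i : ℂ)) (g' := fun _ => L)
      (fun i _ => hw.sub_const _)
    simpa [← Finset.sum_smul] using this
  -- derivative of F := lhs - rhs of the algebraic equation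
  have hFd : HasFDerivAt
      (fun q => (w q - (q.1 : ℂ)) * ∏ i, (w q - (a i : ℂ)) -
        (w q - (q.1 : ℂ) + 1 - (q.2 : ℂ)) * ∏ i, (w q - (b i : ℂ)))
      (((W - (p.1 : ℂ)) • (SA • L) + A • (L - Cχ)) -
        ((W - (p.1 : ℂ) + 1 - (p.2 : ℂ)) • (SB • L) + B • ((L - Cχ) - Cη))) p := by
    exact ((hw.sub hχ).mul hAd).sub ((((hw.sub hχ).add_const 1).sub hη2).mul hBd)
  -- F vanishes near p, so its derivative is 0
  have hzero : (((W - (p.1 : ℂ)) • (SA • L) + A • (L - Cχ)) -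
      ((W - (p.1 : ℂ) + 1 - (p.2 : ℂ)) • (SB • L) + B • ((L - Cχ) - Cη))) = 0 := by
    have hev : (fun _ : ℝ × ℝ => (0 : ℂ)) =ᶠ[nhds p]
        (fun q => (w q - (q.1 : ℂ)) * ∏ i, (w q - (a i : ℂ)) -
          (w q - (q.1 : ℂ) + 1 - (q.2 : ℂ)) * ∏ i, (w q - (b i : ℂ))) := by
      filter_upwards [hD.mem_nhds hp] with q hq
      exact (sub_eq_zero.mpr (halg q hq)).symm
    exact ((hFd.congr_of_eventuallyEq hev).unique (hasFDerivAt_const 0 p)).symm ▸ rfl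
  -- evaluate the vanishing derivative in the two coordinate directions
  have eq1 : (W - (p.1 : ℂ)) * (SA * L (1,0)) + A * (L (1,0) - 1) -
      ((W - (p.1 : ℂ) + 1 - (p.2 : ℂ)) * (SB * L (1,0)) + B * (L (1,0) - 1 - 0)) = 0 := by
    have h := ContinuousLinearMap.ext_iff.mp hzero ((1:ℝ), (0:ℝ))
    simpa [Cχ, Cη, ContinuousLinearMap.sub_apply, ContinuousLinearMap.add_apply,
      ContinuousLinearMap.smul_apply, ContinuousLinearMap.comp_apply, smul_eq_mul] using h
  have eq2 : (W - (p.1 : ℂ)) * (SA * L (0,1)) + A * (L (0,1) - 0) -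
      ((W - (p.1 : ℂ) + 1 - (p.2 : ℂ)) * (SB * L (0,1)) + B * (L (0,1) - 0 - 1)) = 0 := by
    have h := ContinuousLinearMap.ext_iff.mp hzero ((0:ℝ), (1:ℝ))
    simpa [Cχ, Cη, ContinuousLinearMap.sub_apply, ContinuousLinearMap.add_apply,
      ContinuousLinearMap.smul_apply, ContinuousLinearMap.comp_apply, smul_eq_mul] using h
  -- nonvanishing facts
  have himp := him p hp
  have hWχ : W - (p.1 : ℂ) ≠ 0 := by
    intro h
    have : (W - (p.1 : ℂ)).im = 0 := by rw [h]; simp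
    rw [hW] at this
    simp [Complex.sub_im] at this
    linarith
  have hBne : B ≠ 0 := by
    rw [hB]
    refine Finset.prod_ne_zero_iff.mpr fun i _ => sub_ne_zero.mpr fun h => ?_
    have : W.im = ((b i : ℂ)).im := congrArg Complex.im h
    rw [hW] at this
    simp at this
    linarith
  have h1η : (1 : ℂ) - (p.2 : ℂ) ≠ 0 := by
    have h2 := (hη p hp).2
    intro h
    have : ((1 - p.2 : ℝ) : ℂ) = 0 := by push_cast; linear_combination h
    have := Complex.ofReal_eq_zero.mp this
    linarith
  have halgp : (W - (p.1 : ℂ)) * A = (W - (p.1 : ℂ) + 1 - (p.2 : ℂ)) * B := halg p hp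
  -- abbreviate Q
  set Q : ℂ := A + (W - (p.1 : ℂ)) * SA - B - (W - (p.1 : ℂ) + 1 - (p.2 : ℂ)) * SB with hQdef
  have eq1' : Q * L (1,0) = A - B := by rw [hQdef]; linear_combination eq1
  have eq2' : Q * L (0,1) = -B := by rw [hQdef]; linear_combination eq2
  have hQ : Q ≠ 0 := by
    intro h
    rw [h, zero_mul] at eq2'
    exact hBne (by linear_combination eq2')
  have key : (W - (p.1 : ℂ)) * L (1,0) = -(((1 : ℂ) - (p.2 : ℂ)) * L (0,1)) := by
    refine mul_left_cancel₀ hQ ?_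
    linear_combination (W - (p.1 : ℂ)) * eq1' + ((1 : ℂ) - (p.2 : ℂ)) * eq2' + halgp
  have hL01 : L (0,1) ≠ 0 := by
    intro h
    rw [h, mul_zero] at eq2'
    exact hBne (by linear_combination eq2')
  constructor
  · field_simp
    linear_combination key
  · rintro ⟨-, h2⟩
    exact hL01 h2
end
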